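/- Let Y₁,…,Yₙ be i.i.d. real random variables with log-MGF Λ(η) = log E[exp(ηY₁)] finite for all η, and let x be a point with Λ*(x) = sup_η (ηx - Λ(η)) attained at η*. Then for any δ > 0, liminf_n (1/n) log P(|Ȳ_n - x| ≤ δ) ≥ -Λ*(x). -/

import Mathlib

open MeasureTheory Filter

lemma aux_cosh (y : ℝ) : 1 + |y| + y^2/4 ≤ Real.exp y + Real.exp (-y) := by
  have h1 : 1 + |y|/2 ≤ Real.exp (|y|/2) := by linarith [Real.add_one_le_exp (|y|/2)]
  have h2 : (1 + |y|/2)^2 ≤ Real.exp (|y|/2) ^ 2 := by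
    have h0 : (0:ℝ) ≤ 1 + |y|/2 := by positivity
    exact pow_le_pow_left₀ h0 h1 2
  have h3 : Real.exp (|y|/2) ^ 2 = Real.exp |y| := by
    rw [sq, ← Real.exp_add]; congr 1; ring
  have h4 : Real.exp |y| ≤ Real.exp y + Real.exp (-y) := by
    rcases abs_cases y with ⟨h, _⟩ | ⟨h, _⟩
    · rw [h]; linarith [Real.exp_pos (-y)]
    · rw [h]; linarith [Real.exp_pos y]
  have h5 : (1 + |y|/2)^2 = 1 + |y| + y^2/4 := by
    have := sq_abs y; nlinarith [sq_abs y]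
  linarith [h2, h3 ▸ h2]

lemma aux_integrable {μ : Measure ℝ} (hmgf : ∀ η : ℝ, Integrable (fun y => Real.exp (η * y)) μ)
    (η : ℝ) {P : ℝ → ℝ} (hP : Continuous P) {K : ℝ}
    (hK : ∀ y, |P y| ≤ K * (Real.exp y + Real.exp (-y))) :
    Integrable (fun y => P y * Real.exp (η * y)) μ := by
  have hKnn : 0 ≤ K := by
    have := hK 0
    simp only [Real.exp_zero, neg_zero] at this
    nlinarith [abs_nonneg (P 0)]
  have hint : Integrable (fun y => K * (Real.exp ((η+1) * y) + Real.exp ((η-1) * y))) μ :=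
    ((hmgf (η+1)).add (hmgf (η-1))).const_mul K
  refine hint.mono ((hP.mul (by continuity)).aestronglyMeasurable) (Filter.Eventually.of_forall fun y => ?_)
  have h1 : ‖P y * Real.exp (η * y)‖ = |P y| * Real.exp (η * y) := by
    rw [Real.norm_eq_abs, abs_mul, abs_of_pos (Real.exp_pos _)]
  have h2 : Real.exp ((η+1) * y) = Real.exp y * Real.exp (η * y) := by
    rw [← Real.exp_add]; ring_nf
  have h3 : Real.exp ((η-1) * y) = Real.exp (-y) * Real.exp (η * y) := by
    rw [← Real.exp_add]; ring_nf
  have h4 : ‖K * (Real.exp ((η+1) * y) + Real.exp ((η-1) * y))‖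
      = K * (Real.exp ((η+1) * y) + Real.exp ((η-1) * y)) := by
    rw [Real.norm_eq_abs, abs_of_nonneg]; positivity
  rw [h1, h4, h2, h3]
  have := hK y
  nlinarith [Real.exp_pos (η * y), abs_nonneg (P y)]

lemma pi_prod_integrable {n : ℕ} (μ : Measure ℝ) [IsProbabilityMeasure μ] {f : Fin n → ℝ → ℝ}
    (hf : ∀ i, Integrable (f i) μ) :
    Integrable (fun ω : Fin n → ℝ => ∏ i, f i (ω i)) (Measure.pi fun _ => μ) := by
  letI : MeasureSpace ℝ := { volume := μ }
  exact Integrable.fin_nat_prod (𝕜 := ℝ) hf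

lemma pi_prod_integral {n : ℕ} (μ : Measure ℝ) [IsProbabilityMeasure μ] (f : Fin n → ℝ → ℝ) :
    ∫ ω : Fin n → ℝ, ∏ i, f i (ω i) ∂(Measure.pi fun _ => μ) = ∏ i, ∫ y, f i y ∂μ := by
  letI : MeasureSpace ℝ := { volume := μ }
  exact integral_fin_nat_prod_eq_prod f


lemma deriv_M (μ : Measure ℝ) [IsProbabilityMeasure μ]
    (hmgf : ∀ η : ℝ, Integrable (fun y => Real.exp (η * y)) μ) (η₀ : ℝ) :
    HasDerivAt (fun η => ∫ y, Real.exp (η * y) ∂μ) (∫ y, y * Real.exp (η₀ * y) ∂μ) η₀ := by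
  have key := hasDerivAt_integral_of_dominated_loc_of_deriv_le
    (F := fun (η : ℝ) (y : ℝ) => Real.exp (η * y))
    (F' := fun (η : ℝ) (y : ℝ) => y * Real.exp (η * y))
    (μ := μ) (x₀ := η₀)
    (bound := fun y => Real.exp ((η₀+2) * y) + 2 * Real.exp (η₀ * y) + Real.exp ((η₀-2) * y))
    (s := Metric.ball η₀ 1) (Metric.ball_mem_nhds η₀ one_pos)
    ?_ (hmgf η₀) ?_ ?_ ?_ ?_
  · exact key.2
  · exact Filter.Eventually.of_forall fun η => (hmgf η).aestronglyMeasurable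
  · exact (Continuous.aestronglyMeasurable (by continuity))
  · refine Filter.Eventually.of_forall fun y => fun η hη => ?_
    have hcosh : |y| ≤ Real.exp y + Real.exp (-y) := by nlinarith [aux_cosh y, sq_nonneg y]
    have hd : |η - η₀| < 1 := by simpa [Real.dist_eq] using hη
    have h1 : Real.exp ((η - η₀) * y) ≤ Real.exp y + Real.exp (-y) := by
      rcases le_or_gt 0 y with hy | hy
      · have : (η - η₀) * y ≤ y := by nlinarith [abs_lt.mp hd]
        calc Real.exp ((η - η₀) * y) ≤ Real.exp y := Real.exp_le_exp.2 this
          _ ≤ _ := by linarith [Real.exp_pos (-y)]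
      · have : (η - η₀) * y ≤ -y := by nlinarith [abs_lt.mp hd]
        calc Real.exp ((η - η₀) * y) ≤ Real.exp (-y) := Real.exp_le_exp.2 this
          _ ≤ _ := by linarith [Real.exp_pos y]
    have hsplit : Real.exp (η * y) = Real.exp ((η - η₀) * y) * Real.exp (η₀ * y) := by
      rw [← Real.exp_add]; congr 1; ring
    have h2 : ‖y * Real.exp (η * y)‖ = |y| * Real.exp (η * y) := by
      rw [Real.norm_eq_abs, abs_mul, abs_of_pos (Real.exp_pos _)]
    rw [h2, hsplit]
    have e1 : Real.exp ((η₀+2) * y) = Real.exp y * Real.exp y * Real.exp (η₀ * y) := by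
      rw [← Real.exp_add, ← Real.exp_add]; congr 1; ring
    have e2 : Real.exp ((η₀-2) * y) = Real.exp (-y) * Real.exp (-y) * Real.exp (η₀ * y) := by
      rw [← Real.exp_add, ← Real.exp_add]; congr 1; ring
    have e3 : Real.exp (η₀ * y) = Real.exp y * Real.exp (-y) * Real.exp (η₀ * y) := by
      rw [← Real.exp_add, ← Real.exp_add]; congr 1; ring
    have hmm : Real.exp ((η - η₀) * y) * |y|
        ≤ (Real.exp y + Real.exp (-y)) * (Real.exp y + Real.exp (-y)) :=
      mul_le_mul h1 hcosh (abs_nonneg y) (by positivity)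
    show |y| * (Real.exp ((η - η₀) * y) * Real.exp (η₀ * y))
      ≤ Real.exp ((η₀+2) * y) + 2 * Real.exp (η₀ * y) + Real.exp ((η₀-2) * y)
    calc |y| * (Real.exp ((η - η₀) * y) * Real.exp (η₀ * y))
        = (Real.exp ((η - η₀) * y) * |y|) * Real.exp (η₀ * y) := by ring
      _ ≤ ((Real.exp y + Real.exp (-y)) * (Real.exp y + Real.exp (-y))) * Real.exp (η₀ * y) :=
          mul_le_mul_of_nonneg_right hmm (Real.exp_pos _).le
      _ = Real.exp ((η₀+2) * y) + 2 * Real.exp (η₀ * y) + Real.exp ((η₀-2) * y) := by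
          rw [e1, e2]; nlinarith [e3]
  · exact ((hmgf (η₀+2)).add ((hmgf η₀).const_mul 2)).add (hmgf (η₀-2))
  · refine Filter.Eventually.of_forall fun y => fun η _ => ?_
    have : HasDerivAt (fun η : ℝ => η * y) y η := hasDerivAt_mul_const y
    simpa [mul_comm] using this.exp

lemma mean_eq (μ : Measure ℝ) [IsProbabilityMeasure μ]
    (hmgf : ∀ η : ℝ, Integrable (fun y => Real.exp (η * y)) μ)
    (Λ : ℝ → ℝ) (hΛ : ∀ η, Λ η = Real.log (∫ y, Real.exp (η * y) ∂μ))
    (x η₀ : ℝ) (hmax : ∀ η, η * x - Λ η ≤ η₀ * x - Λ η₀) :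
    ∫ y, y * Real.exp (η₀ * y) ∂μ = x * ∫ y, Real.exp (η₀ * y) ∂μ := by
  have hM₀ : 0 < ∫ y, Real.exp (η₀ * y) ∂μ := integral_exp_pos (hmgf η₀)
  have hM' := deriv_M μ hmgf η₀
  have hΛ' : HasDerivAt Λ ((∫ y, y * Real.exp (η₀ * y) ∂μ) / ∫ y, Real.exp (η₀ * y) ∂μ) η₀ := by
    have : Λ = fun η => Real.log (∫ y, Real.exp (η * y) ∂μ) := funext hΛ
    rw [this]
    exact hM'.log hM₀.ne'
  have hφ : HasDerivAt (fun η => η * x - Λ η)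
      (x - (∫ y, y * Real.exp (η₀ * y) ∂μ) / ∫ y, Real.exp (η₀ * y) ∂μ) η₀ :=
    (hasDerivAt_mul_const x).sub hΛ'
  have hloc : IsLocalMax (fun η => η * x - Λ η) η₀ :=
    Filter.Eventually.of_forall fun η => hmax η
  have := hloc.hasDerivAt_eq_zero hφ
  have hx : x = (∫ y, y * Real.exp (η₀ * y) ∂μ) / ∫ y, Real.exp (η₀ * y) ∂μ := by linarith
  rw [hx, div_mul_cancel₀ _ hM₀.ne']

lemma cheb {μ : Measure ℝ} [IsProbabilityMeasure μ] {w : ℝ → ℝ} {x : ℝ}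
    (hw_nn : ∀ y, 0 ≤ w y) (hw_int : Integrable w μ) (hw1 : ∫ y, w y ∂μ = 1)
    (hzw_int : Integrable (fun y => (y - x) * w y) μ) (hzw0 : ∫ y, (y - x) * w y ∂μ = 0)
    (hz2w_int : Integrable (fun y => (y - x) * ((y - x) * w y)) μ)
    {ε : ℝ} (hε : 0 < ε) (n : ℕ) (hn : 1 ≤ n) :
    1 - (∫ y, (y - x) * ((y - x) * w y) ∂μ) / (n * ε^2)
      ≤ ∫ ω in {ω : Fin n → ℝ | |(∑ i, ω i) / (n:ℝ) - x| ≤ ε},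
          (∏ i, w (ω i)) ∂(Measure.pi fun _ : Fin n => μ) := by
  classical
  set σ2 := ∫ y, (y - x) * ((y - x) * w y) ∂μ with hσ2
  set P : Measure (Fin n → ℝ) := Measure.pi fun _ : Fin n => μ with hP
  set A : Set (Fin n → ℝ) := {ω | |(∑ i, ω i) / (n:ℝ) - x| ≤ ε} with hA
  have hnpos : (0:ℝ) < n := by exact_mod_cast hn
  have hAmeas : MeasurableSet A := by
    have hS : Measurable fun ω : Fin n → ℝ => (∑ i, ω i) / (n:ℝ) - x :=
      ((Finset.measurable_sum Finset.univ fun i _ => measurable_pi_apply i).div_const _).sub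
        measurable_const
    exact measurableSet_le hS.abs measurable_const
  set W : (Fin n → ℝ) → ℝ := fun ω => ∏ i, w (ω i) with hW
  have hW_int : Integrable W P := pi_prod_integrable μ fun _ => hw_int
  have hW_nn : ∀ ω, 0 ≤ W ω := fun ω => Finset.prod_nonneg fun i _ => hw_nn _
  have hW_total : ∫ ω, W ω ∂P = 1 := by
    rw [hW, pi_prod_integral]
    simp [hw1]
  -- the per-coordinate functions
  set gw : Fin n → Fin n → Fin n → ℝ → ℝ := fun i j k y =>
    (if k = i then y - x else 1) * ((if k = j then y - x else 1) * w y) with hgw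
  have hgw_int : ∀ i j k, Integrable (gw i j k) μ := by
    intro i j k
    rcases eq_or_ne k i with rfl | h1
    · rcases eq_or_ne k j with rfl | h2
      · simpa [hgw] using hz2w_int
      · simpa [hgw, h2] using hzw_int
    · rcases eq_or_ne k j with rfl | h2
      · simpa [hgw, h1] using hzw_int
      · simpa [hgw, h1, h2] using hw_int
  have hgw_val : ∀ i j, (∏ k, ∫ y, gw i j k y ∂μ) = if i = j then σ2 else 0 := by
    intro i j
    by_cases hij : i = j
    · subst hij
      rw [if_pos rfl]
      refine Finset.prod_eq_single_of_mem i (Finset.mem_univ i) (fun k _ hk => ?_) |>.trans ?_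
      · have h : gw i i k = w := by funext y; simp [hgw, hk]
        rw [h, hw1]
      · have h : gw i i i = fun y => (y - x) * ((y - x) * w y) := by funext y; simp [hgw]
        rw [h]
    · rw [if_neg hij]
      refine Finset.prod_eq_zero (Finset.mem_univ i) ?_
      have h : gw i j i = fun y => (y - x) * w y := by funext y; simp [hgw, hij]
      rw [h, hzw0]
  -- the quadratic dominating function
  set q : (Fin n → ℝ) → ℝ := fun ω => (((n:ℝ) * ε)^2)⁻¹ * ∑ i, ∑ j, ∏ k, gw i j k (ω k) with hq
  have hq_int : Integrable q P := by
    refine Integrable.const_mul ?_ _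
    exact integrable_finset_sum _ fun i _ => integrable_finset_sum _ fun j _ =>
      pi_prod_integrable μ fun k => hgw_int i j k
  have hprod_eq : ∀ (i j : Fin n) (ω : Fin n → ℝ),
      (∏ k, gw i j k (ω k)) = (ω i - x) * (ω j - x) * W ω := by
    intro i j ω
    calc (∏ k, gw i j k (ω k))
        = (∏ k, (if k = i then ω k - x else 1)) *
            ((∏ k, (if k = j then ω k - x else 1)) * ∏ k, w (ω k)) := by
          rw [← Finset.prod_mul_distrib, ← Finset.prod_mul_distrib]
      _ = (ω i - x) * ((ω j - x) * W ω) := by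
          simp [Finset.prod_ite_eq', hW]
      _ = (ω i - x) * (ω j - x) * W ω := by ring
  have hq_eq : ∀ ω, q ω = (((n:ℝ) * ε)^2)⁻¹ * (((∑ i, ω i) - n * x)^2 * W ω) := by
    intro ω
    have h0 : q ω = (((n:ℝ) * ε)^2)⁻¹ * ∑ i, ∑ j, ∏ k, gw i j k (ω k) := rfl
    rw [h0]
    have : ∑ i, ∑ j, ∏ k, gw i j k (ω k) = (∑ i, (ω i - x)) * (∑ j, (ω j - x)) * W ω := by
      rw [Finset.sum_mul_sum, Finset.sum_mul]
      refine Finset.sum_congr rfl fun i _ => ?_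
      rw [Finset.sum_mul]
      exact Finset.sum_congr rfl fun j _ => hprod_eq i j ω
    rw [this, Finset.sum_sub_distrib]
    simp only [Finset.sum_const, Finset.card_univ, Fintype.card_fin, nsmul_eq_mul]
    ring
  have hq_integral : ∫ ω, q ω ∂P = (((n:ℝ) * ε)^2)⁻¹ * (n * σ2) := by
    have h0 : ∫ ω, q ω ∂P
        = ∫ ω, (((n:ℝ) * ε)^2)⁻¹ * ∑ i, ∑ j, ∏ k, gw i j k (ω k) ∂P := rfl
    rw [h0, integral_const_mul]
    congr 1
    rw [integral_finset_sum _ fun i _ => integrable_finset_sum _ fun j _ =>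
      pi_prod_integrable μ fun k => hgw_int i j k]
    have : ∀ i : Fin n, ∫ ω, ∑ j, ∏ k, gw i j k (ω k) ∂P = σ2 := by
      intro i
      rw [integral_finset_sum _ fun j _ => pi_prod_integrable μ fun k => hgw_int i j k]
      have : ∀ j, ∫ ω, ∏ k, gw i j k (ω k) ∂P = if i = j then σ2 else 0 := by
        intro j
        rw [pi_prod_integral]
        exact hgw_val i j
      rw [Finset.sum_congr rfl fun j _ => this j]
      simp
    rw [Finset.sum_congr rfl fun i _ => this i]
    simp [Finset.card_univ]
  -- pointwise bound on the complement
  have hpt : ∀ ω, Set.indicator Aᶜ W ω ≤ q ω := by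
    intro ω
    by_cases hω : ω ∈ Aᶜ
    · rw [Set.indicator_of_mem hω]
      have hnot : ¬ |(∑ i, ω i) / (n:ℝ) - x| ≤ ε := hω
      push_neg at hnot
      have habs : (n:ℝ) * ε < |(∑ i, ω i) - n * x| := by
        have : |(∑ i, ω i) - (n:ℝ) * x| = (n:ℝ) * |(∑ i, ω i) / (n:ℝ) - x| := by
          rw [← abs_of_pos hnpos, ← abs_mul]
          congr 1
          field_simp
          rw [abs_of_pos hnpos]; ring
        rw [this]
        exact (mul_lt_mul_iff_right₀ hnpos).2 hnot
      have hsq : ((n:ℝ) * ε)^2 < ((∑ i, ω i) - n * x)^2 := by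
        have h0 : (0:ℝ) ≤ (n:ℝ) * ε := by positivity
        calc ((n:ℝ) * ε)^2 < |(∑ i, ω i) - n * x|^2 := by
              exact pow_lt_pow_left₀ habs h0 two_ne_zero
          _ = ((∑ i, ω i) - n * x)^2 := sq_abs _
      rw [hq_eq]
      rw [inv_mul_eq_div, le_div_iff₀ (by positivity)]
      nlinarith [mul_le_mul_of_nonneg_right hsq.le (hW_nn ω)]
    · rw [Set.indicator_of_notMem hω, hq_eq]
      have := hW_nn ω
      have h2 := sq_nonneg ((∑ i, ω i) - (n:ℝ) * x)
      positivity
  have hcompl_le : ∫ ω in Aᶜ, W ω ∂P ≤ (((n:ℝ) * ε)^2)⁻¹ * (n * σ2) := by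
    rw [← hq_integral, ← integral_indicator hAmeas.compl]
    exact integral_mono (hW_int.indicator hAmeas.compl) hq_int hpt
  have hsplit : ∫ ω in A, W ω ∂P + ∫ ω in Aᶜ, W ω ∂P = 1 := by
    rw [integral_add_compl hAmeas hW_int, hW_total]
  have hfinal : (((n:ℝ) * ε)^2)⁻¹ * (n * σ2) = σ2 / (n * ε^2) := by
    field_simp
  linarith [hcompl_le, hsplit, hfinal ▸ hcompl_le]


set_option maxHeartbeats 1000000 in
theorem stmt13 (μ : Measure ℝ) [IsProbabilityMeasure μ]
    (hmgf : ∀ η : ℝ, Integrable (fun y => Real.exp (η * y)) μ)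
    (Λ : ℝ → ℝ) (hΛ : ∀ η, Λ η = Real.log (∫ y, Real.exp (η * y) ∂μ))
    (x η₀ : ℝ) (hmax : ∀ η, η * x - Λ η ≤ η₀ * x - Λ η₀)
    (δ : ℝ) (hδ : 0 < δ) :
    -(η₀ * x - Λ η₀) ≤ Filter.liminf (fun n : ℕ =>
      (1 / (n : ℝ)) * Real.log ((Measure.pi (fun _ : Fin n => μ))
        {ω : Fin n → ℝ | |(∑ i, ω i) / (n : ℝ) - x| ≤ δ}).toReal)
      Filter.atTop := by
  classical
  set f : ℕ → ℝ := fun n : ℕ =>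
      (1 / (n : ℝ)) * Real.log ((Measure.pi (fun _ : Fin n => μ))
        {ω : Fin n → ℝ | |(∑ i, ω i) / (n : ℝ) - x| ≤ δ}).toReal with hf
  set c : ℝ := -(η₀ * x - Λ η₀) with hc
  set L : ℝ := Filter.liminf f Filter.atTop with hL
  -- basic facts about the mgf at η₀
  have hM₀ : 0 < ∫ y, Real.exp (η₀ * y) ∂μ := integral_exp_pos (hmgf η₀)
  have hexpΛ : Real.exp (Λ η₀) = ∫ y, Real.exp (η₀ * y) ∂μ := by
    rw [hΛ η₀, Real.exp_log hM₀]
  -- the tilted density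
  set w : ℝ → ℝ := fun y => Real.exp (η₀ * y - Λ η₀) with hw
  have hw_nn : ∀ y, 0 ≤ w y := fun y => (Real.exp_pos _).le
  have hw_eq : ∀ y, w y = Real.exp (η₀ * y) / Real.exp (Λ η₀) := fun y => Real.exp_sub _ _
  have hw_int : Integrable w μ := by
    have := (hmgf η₀).div_const (Real.exp (Λ η₀))
    exact this.congr (Filter.Eventually.of_forall fun y => (hw_eq y).symm)
  have hw1 : ∫ y, w y ∂μ = 1 := by
    calc ∫ y, w y ∂μ = ∫ y, Real.exp (η₀ * y) / Real.exp (Λ η₀) ∂μ := by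
          exact integral_congr_ae (Filter.Eventually.of_forall fun y => hw_eq y)
      _ = (∫ y, Real.exp (η₀ * y) ∂μ) / Real.exp (Λ η₀) := integral_div _ _
      _ = 1 := by rw [hexpΛ]; exact div_self hM₀.ne'
  -- integrability of moments against the tilt
  have hcosh_ge1 : ∀ y : ℝ, 1 ≤ Real.exp y + Real.exp (-y) := by
    intro y; nlinarith [aux_cosh y, abs_nonneg y, sq_nonneg y]
  have I2 : Integrable (fun y => (y - x) * Real.exp (η₀ * y)) μ := by
    refine aux_integrable hmgf η₀ (by continuity) (K := 1 + |x|) fun y => ?_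
    have h1 := aux_cosh y
    have h2 : |y - x| ≤ |y| + |x| := abs_sub _ _
    nlinarith [abs_nonneg y, abs_nonneg x, sq_nonneg y, hcosh_ge1 y]
  have I3 : Integrable (fun y => ((y - x) * (y - x)) * Real.exp (η₀ * y)) μ := by
    refine aux_integrable hmgf η₀ (by continuity) (K := 8 + 2 * x ^ 2) fun y => ?_
    have h1 := aux_cosh y
    have h2 : |(y - x) * (y - x)| = (y - x) * (y - x) := abs_of_nonneg (mul_self_nonneg _)
    rw [h2]
    nlinarith [sq_nonneg (y + x), sq_nonneg (y - x), abs_nonneg y, sq_abs y, hcosh_ge1 y,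
      sq_nonneg x]
  have hzw_int : Integrable (fun y => (y - x) * w y) μ := by
    have := I2.div_const (Real.exp (Λ η₀))
    refine this.congr (Filter.Eventually.of_forall fun y => ?_)
    show (y - x) * Real.exp (η₀ * y) / Real.exp (Λ η₀) = (y - x) * w y
    rw [hw_eq y]; ring
  have hz2w_int : Integrable (fun y => (y - x) * ((y - x) * w y)) μ := by
    have := I3.div_const (Real.exp (Λ η₀))
    refine this.congr (Filter.Eventually.of_forall fun y => ?_)
    show (y - x) * (y - x) * Real.exp (η₀ * y) / Real.exp (Λ η₀) = (y - x) * ((y - x) * w y)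
    rw [hw_eq y]; ring
  -- the tilted measure has mean x
  have hmean := mean_eq μ hmgf Λ hΛ x η₀ hmax
  have hzw0 : ∫ y, (y - x) * w y ∂μ = 0 := by
    have heq : ∀ y, (y - x) * w y
        = (Real.exp (Λ η₀))⁻¹ * (y * Real.exp (η₀ * y))
          - ((Real.exp (Λ η₀))⁻¹ * x) * Real.exp (η₀ * y) := by
      intro y; rw [hw_eq y, div_eq_mul_inv]; ring
    have I1 : Integrable (fun y => y * Real.exp (η₀ * y)) μ := by
      refine aux_integrable hmgf η₀ continuous_id (K := 1) fun y => ?_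
      show |y| ≤ 1 * (Real.exp y + Real.exp (-y))
      nlinarith [aux_cosh y, abs_nonneg y, sq_nonneg y]
    calc ∫ y, (y - x) * w y ∂μ
        = ∫ y, ((Real.exp (Λ η₀))⁻¹ * (y * Real.exp (η₀ * y))
            - ((Real.exp (Λ η₀))⁻¹ * x) * Real.exp (η₀ * y)) ∂μ :=
          integral_congr_ae (Filter.Eventually.of_forall fun y => heq y)
      _ = (Real.exp (Λ η₀))⁻¹ * ∫ y, y * Real.exp (η₀ * y) ∂μ
            - ((Real.exp (Λ η₀))⁻¹ * x) * ∫ y, Real.exp (η₀ * y) ∂μ := by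
          rw [integral_sub (I1.const_mul _) ((hmgf η₀).const_mul _),
            integral_const_mul, integral_const_mul]
      _ = 0 := by rw [hmean]; ring
  set σ2 : ℝ := ∫ y, (y - x) * ((y - x) * w y) ∂μ with hσ2
  have hσ2nn : 0 ≤ σ2 := by
    refine integral_nonneg fun y => ?_
    simp only [Pi.zero_apply]
    have := hw_nn y
    nlinarith [sq_nonneg (y - x)]
  -- the main estimate, for every small ε
  suffices H : ∀ ε : ℝ, 0 < ε → ε ≤ δ → c - |η₀| * ε ≤ L by
    by_contra hcon
    push_neg at hcon
    have hpos : 0 < (c - L) / (2 * (|η₀| + 1)) := by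
      have : 0 < c - L := by linarith
      positivity
    set ε : ℝ := min δ ((c - L) / (2 * (|η₀| + 1))) with hε
    have hε1 : 0 < ε := lt_min hδ hpos
    have h1 := H ε hε1 (min_le_left _ _)
    have h2 : ε ≤ (c - L) / (2 * (|η₀| + 1)) := min_le_right _ _
    have h3 : |η₀| * ε ≤ |η₀| * ((c - L) / (2 * (|η₀| + 1))) :=
      mul_le_mul_of_nonneg_left h2 (abs_nonneg _)
    have h4 : |η₀| * ((c - L) / (2 * (|η₀| + 1))) < c - L := by
      rw [mul_div_assoc']
      rw [div_lt_iff₀ (by positivity)]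
      nlinarith [abs_nonneg η₀, hcon]
    linarith
  intro ε hε hεδ
  -- the eventual lower bound on f
  set u : ℕ → ℝ := fun n => (c - |η₀| * ε) + (1 / (n : ℝ)) * Real.log (1 / 2) with hu
  have hu_tend : Filter.Tendsto u Filter.atTop (nhds (c - |η₀| * ε)) := by
    have h1 := tendsto_one_div_atTop_nhds_zero_nat.mul_const (Real.log (1 / 2))
    rw [zero_mul] at h1
    have h2 := (tendsto_const_nhds (x := c - |η₀| * ε) (f := Filter.atTop (α := ℕ))).add h1
    rw [add_zero] at h2
    exact h2
  have hEv : ∀ᶠ n : ℕ in Filter.atTop, u n ≤ f n := by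
    rw [Filter.eventually_atTop]
    refine ⟨max (⌈2 * σ2 / ε ^ 2⌉₊ + 1) 1, fun n hn => ?_⟩
    have hn1 : 1 ≤ n := le_trans (le_max_right _ _) hn
    have hnpos : (0:ℝ) < n := by exact_mod_cast hn1
    have hnceil : 2 * σ2 / ε ^ 2 < (n : ℝ) := by
      have h1 : (⌈2 * σ2 / ε ^ 2⌉₊ + 1 : ℕ) ≤ n := le_trans (le_max_left _ _) hn
      have h2 := Nat.le_ceil (2 * σ2 / ε ^ 2)
      have h3 : ((⌈2 * σ2 / ε ^ 2⌉₊ : ℝ) + 1) ≤ (n : ℝ) := by exact_mod_cast h1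
      linarith
    have hhalf : σ2 / ((n : ℝ) * ε ^ 2) ≤ 1 / 2 := by
      rw [div_le_iff₀ (by positivity)]
      have := (div_lt_iff₀ (by positivity : (0:ℝ) < ε ^ 2)).1 hnceil
      linarith
    -- Chebyshev lower bound for the tilted mass of Aε
    have hcheb := cheb hw_nn hw_int hw1 hzw_int hzw0 hz2w_int hε n hn1
    rw [← hσ2] at hcheb
    set P : Measure (Fin n → ℝ) := Measure.pi fun _ : Fin n => μ with hP
    set Aε : Set (Fin n → ℝ) := {ω | |(∑ i, ω i) / (n:ℝ) - x| ≤ ε} with hAε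
    set Aδ : Set (Fin n → ℝ) := {ω | |(∑ i, ω i) / (n:ℝ) - x| ≤ δ} with hAδ
    have hT : (1:ℝ) / 2 ≤ ∫ ω in Aε, (∏ i, w (ω i)) ∂P := le_trans (by linarith) hcheb
    -- measurability
    have hS : Measurable fun ω : Fin n → ℝ => (∑ i, ω i) / (n:ℝ) - x :=
      ((Finset.measurable_sum Finset.univ fun i _ => measurable_pi_apply i).div_const _).sub
        measurable_const
    have hAεm : MeasurableSet Aε := measurableSet_le hS.abs measurable_const
    -- tilt upper bound on Aε
    set C : ℝ := Real.exp ((n : ℝ) * (η₀ * x + |η₀| * ε - Λ η₀)) with hC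
    have hW_bound : ∀ ω ∈ Aε, (∏ i, w (ω i)) ≤ C := by
      intro ω hω
      have hWexp : (∏ i, w (ω i)) = Real.exp (∑ i, (η₀ * ω i - Λ η₀)) := by
        rw [Real.exp_sum]
      rw [hWexp, hC, Real.exp_le_exp]
      have hsum : ∑ i, (η₀ * ω i - Λ η₀) = η₀ * (∑ i, ω i) - (n : ℝ) * Λ η₀ := by
        rw [Finset.sum_sub_distrib, ← Finset.mul_sum]
        simp [Finset.card_univ]
      rw [hsum]
      have hA : |(∑ i, ω i) / (n:ℝ) - x| ≤ ε := hω
      have key : η₀ * ((∑ i, ω i) / (n:ℝ)) - η₀ * x ≤ |η₀| * ε := by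
        have h1 : η₀ * ((∑ i, ω i) / (n:ℝ)) - η₀ * x = η₀ * ((∑ i, ω i) / (n:ℝ) - x) := by ring
        rw [h1]
        calc η₀ * ((∑ i, ω i) / (n:ℝ) - x) ≤ |η₀ * ((∑ i, ω i) / (n:ℝ) - x)| := le_abs_self _
          _ = |η₀| * |(∑ i, ω i) / (n:ℝ) - x| := abs_mul _ _
          _ ≤ |η₀| * ε := mul_le_mul_of_nonneg_left hA (abs_nonneg _)
      have h2 : η₀ * (∑ i, ω i) = (n : ℝ) * (η₀ * ((∑ i, ω i) / (n:ℝ))) := by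
        field_simp
      rw [h2]
      have key2 : (n:ℝ) * (η₀ * ((∑ i, ω i) / (n:ℝ)) - η₀ * x) ≤ (n:ℝ) * (|η₀| * ε) :=
        mul_le_mul_of_nonneg_left key hnpos.le
      nlinarith [key2]
    have hW_int : Integrable (fun ω : Fin n → ℝ => ∏ i, w (ω i)) P :=
      pi_prod_integrable (n := n) μ (f := fun _ => w) fun _ => hw_int
    have hB : ∫ ω in Aε, (∏ i, w (ω i)) ∂P ≤ C * (P Aδ).toReal := by
      calc ∫ ω in Aε, (∏ i, w (ω i)) ∂P ≤ ∫ _ω in Aε, C ∂P := by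
            refine setIntegral_mono_on hW_int.integrableOn
              (integrableOn_const (measure_ne_top _ _)) hAεm hW_bound
        _ = (P Aε).toReal * C := by rw [setIntegral_const, smul_eq_mul]; rfl
        _ ≤ (P Aδ).toReal * C := by
            refine mul_le_mul_of_nonneg_right ?_ (Real.exp_pos _).le
            refine ENNReal.toReal_le_toReal (measure_ne_top _ _) (measure_ne_top _ _) |>.2 ?_
            refine measure_mono fun ω hω => ?_
            exact le_trans hω hεδ
        _ = C * (P Aδ).toReal := mul_comm _ _
    -- conclude
    have hCpos : 0 < C := Real.exp_pos _
    have hPδpos : (1:ℝ)/2 * C⁻¹ ≤ (P Aδ).toReal := by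
      have h := le_trans hT hB
      calc (1:ℝ)/2 * C⁻¹ = (1/2) / C := by ring
        _ ≤ (P Aδ).toReal := by
          rw [div_le_iff₀ hCpos]
          nlinarith
    have hlog : Real.log (1/2) - (n : ℝ) * (η₀ * x + |η₀| * ε - Λ η₀)
        ≤ Real.log ((P Aδ).toReal) := by
      have h0 : (0:ℝ) < 1/2 * C⁻¹ := by positivity
      calc Real.log (1/2) - (n : ℝ) * (η₀ * x + |η₀| * ε - Λ η₀)
          = Real.log (1/2 * C⁻¹) := by
            rw [Real.log_mul (by norm_num) (by positivity), Real.log_inv, hC, Real.log_exp]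
            ring
        _ ≤ Real.log ((P Aδ).toReal) := Real.log_le_log h0 hPδpos
    have hfn : f n = (1 / (n:ℝ)) * Real.log ((P Aδ).toReal) := rfl
    rw [hfn, hu]
    have h5 : (1 / (n:ℝ)) * (Real.log (1/2) - (n : ℝ) * (η₀ * x + |η₀| * ε - Λ η₀))
        ≤ (1 / (n:ℝ)) * Real.log ((P Aδ).toReal) :=
      mul_le_mul_of_nonneg_left hlog (by positivity)
    have h6 : (1 / (n:ℝ)) * (Real.log (1/2) - (n : ℝ) * (η₀ * x + |η₀| * ε - Λ η₀))
        = (c - |η₀| * ε) + (1 / (n:ℝ)) * Real.log (1/2) := by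
      rw [hc]
      field_simp
      ring
    linarith
  -- pass to the liminf
  have hu_bd : Filter.IsBoundedUnder (· ≥ ·) Filter.atTop u := hu_tend.isBoundedUnder_ge
  have hf_cb : Filter.IsCoboundedUnder (· ≥ ·) Filter.atTop f := by
    refine Filter.IsBoundedUnder.isCoboundedUnder_ge ?_
    refine Filter.isBoundedUnder_of ⟨0, fun n => ?_⟩
    refine mul_nonpos_of_nonneg_of_nonpos (by positivity) ?_
    refine Real.log_nonpos ENNReal.toReal_nonneg ?_
    have h1 : (Measure.pi (fun _ : Fin n => μ))
        {ω : Fin n → ℝ | |(∑ i, ω i) / (n : ℝ) - x| ≤ δ} ≤ 1 := prob_le_one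
    calc ((Measure.pi (fun _ : Fin n => μ))
        {ω : Fin n → ℝ | |(∑ i, ω i) / (n : ℝ) - x| ≤ δ}).toReal
        ≤ (1 : ENNReal).toReal := ENNReal.toReal_mono ENNReal.one_ne_top h1
      _ = 1 := ENNReal.toReal_one
  calc c - |η₀| * ε = Filter.liminf u Filter.atTop := (hu_tend.liminf_eq).symm
    _ ≤ L := Filter.liminf_le_liminf hEv hu_bd hf_cb
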